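/- For integers 0 ≤ s ≤ t, one has C(2t, 2s) · (2t-2s-1)!! ≥ C(t, s) · (t/2)^(t-s), where (2m-1)!! = (2m)!/(2^m · m!) with (-1)!! = 1. -/

import Mathlib

open Finset

lemma aux_A (m t : ℕ) (hmt : m ≤ t) :
    t ^ m * m.factorial ≤ t.descFactorial m * (2 * m).descFactorial m := by
  rw [Nat.descFactorial_eq_prod_range, Nat.descFactorial_eq_prod_range,
    ← Finset.prod_mul_distrib]
  have h1 : t ^ m * m.factorial = ∏ i ∈ range m, t * (m - i) := by
    rw [Finset.prod_mul_distrib, Finset.prod_const, Finset.card_range,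
      ← Nat.descFactorial_self, Nat.descFactorial_eq_prod_range]
  rw [h1]
  apply Finset.prod_le_prod'
  intro i hi
  have hi' : i < m := Finset.mem_range.mp hi
  obtain ⟨a, ha⟩ : ∃ a, t = a + i := ⟨t - i, by omega⟩
  obtain ⟨b, hb⟩ : ∃ b, m = b + i := ⟨m - i, by omega⟩
  have hab : b ≤ a := by omega
  have hb1 : 1 ≤ b := by omega
  have e1 : t - i = a := by omega
  have e2 : m - i = b := by omega
  have e3 : 2 * m - i = 2 * b + i := by omega
  rw [e1, e2, e3, ha]
  nlinarith [Nat.mul_le_mul_right i hab]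

lemma aux_B (s t : ℕ) : t.choose s * t.choose s ≤ (2 * t).choose (2 * s) := by
  rw [two_mul t, Nat.add_choose_eq]
  have hmem : ((s, s) : ℕ × ℕ) ∈ Finset.HasAntidiagonal.antidiagonal (2 * s) := by
    rw [Finset.HasAntidiagonal.mem_antidiagonal]; ring
  exact Finset.single_le_sum (f := fun ij => t.choose ij.1 * t.choose ij.2) (fun i _ => Nat.zero_le _) hmem

lemma key_nat (s t : ℕ) (hst : s ≤ t) :
    t.choose s * (t ^ (t - s) * (t - s).factorial)
      ≤ (2 * t).choose (2 * s) * (2 * (t - s)).factorial := by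
  set m := t - s with hm
  have hmt : m ≤ t := Nat.sub_le _ _
  have hdf : m.factorial * (2 * m).descFactorial m = (2 * m).factorial := by
    have := Nat.factorial_mul_descFactorial (show m ≤ 2 * m by omega)
    rwa [show 2 * m - m = m by omega] at this
  have h1 : t ^ m * m.factorial * m.factorial ≤ t.choose m * (2 * m).factorial * m.factorial := by
    calc t ^ m * m.factorial * m.factorial
        ≤ t.descFactorial m * (2 * m).descFactorial m * m.factorial :=
          Nat.mul_le_mul_right _ (aux_A m t hmt)
      _ = (m.factorial * t.choose m) * (m.factorial * (2 * m).descFactorial m) := by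
          rw [Nat.descFactorial_eq_factorial_mul_choose]; ring
      _ = t.choose m * (2 * m).factorial * m.factorial := by rw [hdf]; ring
  have h2 : t ^ m * m.factorial ≤ t.choose m * (2 * m).factorial :=
    Nat.le_of_mul_le_mul_right h1 (Nat.factorial_pos m)
  have hcs : t.choose m = t.choose s := by
    rw [hm]; exact Nat.choose_symm hst
  calc t.choose s * (t ^ m * m.factorial)
      ≤ t.choose s * (t.choose m * (2 * m).factorial) :=
        Nat.mul_le_mul_left _ h2
    _ = t.choose s * t.choose s * (2 * m).factorial := by rw [hcs]; ring
    _ ≤ (2 * t).choose (2 * s) * (2 * m).factorial :=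
        Nat.mul_le_mul_right _ (aux_B s t)

theorem stmt2 (s t : ℕ) (hst : s ≤ t) :
    (Nat.choose (2 * t) (2 * s) : ℝ) *
        (((2 * (t - s)).factorial : ℝ) / (2 ^ (t - s) * ((t - s).factorial : ℝ)))
      ≥ (Nat.choose t s : ℝ) * ((t : ℝ) / 2) ^ (t - s) := by
  set m := t - s with hm
  have key := key_nat s t hst
  have key' : (Nat.choose t s : ℝ) * ((t:ℝ) ^ m * (m.factorial : ℝ))
      ≤ ((2 * t).choose (2 * s) : ℝ) * ((2 * m).factorial : ℝ) := by
    exact_mod_cast key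
  have hpos : (0:ℝ) < 2 ^ m * (m.factorial : ℝ) := by
    positivity
  rw [ge_iff_le, div_pow, mul_div_assoc', mul_div_assoc',
    div_le_div_iff₀ (by positivity) hpos]
  have h2m : (0:ℝ) ≤ (2:ℝ) ^ m := by positivity
  nlinarith [mul_le_mul_of_nonneg_right key' h2m]
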